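/- If a, b ∈ ℝ³ are orthogonal unit vectors, then there exist indices i, j with |a_i b_j + b_i a_j|/2 ≥ 1/(3√2). Consequently, the symmetric matrix a ⊙ b := (a ⊗ b + b ⊗ a)/2 has entry-wise maximum norm at least 1/(3√2) and at most 1. -/

import Mathlib

theorem stmt5 (a b : EuclideanSpace ℝ (Fin 3))
    (ha : ‖a‖ = 1) (hb : ‖b‖ = 1) (hab : (inner ℝ a b : ℝ) = 0) :
    (∃ i j : Fin 3, 1 / (3 * Real.sqrt 2) ≤ |a i * b j + b i * a j| / 2)
    ∧ 1 / (3 * Real.sqrt 2) ≤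
        (⨆ i : Fin 3, ⨆ j : Fin 3, |(a i * b j + b i * a j) / 2|)
    ∧ (⨆ i : Fin 3, ⨆ j : Fin 3, |(a i * b j + b i * a j) / 2|) ≤ 1 := by
  have hA : ∑ i : Fin 3, a i * a i = 1 := by
    have h := real_inner_self_eq_norm_sq a
    rw [ha] at h
    simpa only [PiLp.inner_apply, RCLike.inner_apply, conj_trivial, one_pow] using h
  have hB : ∑ i : Fin 3, b i * b i = 1 := by
    have h := real_inner_self_eq_norm_sq b
    rw [hb] at h
    simpa only [PiLp.inner_apply, RCLike.inner_apply, conj_trivial, one_pow] using h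
  have hAB : ∑ i : Fin 3, a i * b i = 0 := by
    simpa [PiLp.inner_apply, RCLike.inner_apply, mul_comm] using hab
  -- Frobenius-type identity
  have hsum : ∑ i : Fin 3, ∑ j : Fin 3, (a i * b j + b i * a j)^2 = 2 := by
    have hexp : ∀ i j : Fin 3, (a i * b j + b i * a j)^2
        = (a i * a i) * (b j * b j) + (b i * b i) * (a j * a j)
          + 2 * ((a i * b i) * (a j * b j)) := fun i j => by ring
    simp_rw [hexp, Finset.sum_add_distrib, ← Finset.mul_sum, hA, hB, hAB,
      ← Finset.sum_mul]
    rw [hA, hB, hAB]; ring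
  -- existence of large entry
  have hex : ∃ i j : Fin 3, (2:ℝ)/9 ≤ (a i * b j + b i * a j)^2 := by
    by_contra h
    push_neg at h
    have hlt : ∑ i : Fin 3, ∑ j : Fin 3, (a i * b j + b i * a j)^2
        < ∑ i : Fin 3, ∑ j : Fin 3, (2:ℝ)/9 := by
      apply Finset.sum_lt_sum_of_nonempty (by simp)
      intro i _
      apply Finset.sum_lt_sum_of_nonempty (by simp)
      intro j _
      exact h i j
    simp at hlt
    rw [hsum] at hlt
    norm_num at hlt
  have key : ∀ x : ℝ, (2:ℝ)/9 ≤ x^2 → 1 / (3 * Real.sqrt 2) ≤ |x| / 2 := by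
    intro x hx
    have h2 : Real.sqrt 2 * Real.sqrt 2 = 2 := Real.mul_self_sqrt (by norm_num)
    have h2pos : (0:ℝ) < Real.sqrt 2 := Real.sqrt_pos.mpr (by norm_num)
    rw [div_le_div_iff₀ (by positivity) (by norm_num)]
    nlinarith [sq_abs x, abs_nonneg x]
  obtain ⟨i, j, hij⟩ := hex
  have hlow := key _ hij
  refine ⟨⟨i, j, hlow⟩, ?_, ?_⟩
  · calc 1 / (3 * Real.sqrt 2) ≤ |(a i * b j + b i * a j) / 2| := by
          rw [abs_div]; simpa using hlow
      _ ≤ ⨆ j' : Fin 3, |(a i * b j' + b i * a j') / 2| :=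
          le_ciSup (f := fun j' : Fin 3 => |(a i * b j' + b i * a j') / 2|)
            (Finite.bddAbove_range _) j
      _ ≤ ⨆ i' : Fin 3, ⨆ j' : Fin 3, |(a i' * b j' + b i' * a j') / 2| :=
          le_ciSup (f := fun i' : Fin 3 => ⨆ j' : Fin 3, |(a i' * b j' + b i' * a j') / 2|)
            (Finite.bddAbove_range _) i
  · have hai : ∀ i : Fin 3, |a i| ≤ 1 := by
      intro k
      have h := Finset.single_le_sum (f := fun i => a i * a i)
        (fun i _ => mul_self_nonneg _) (Finset.mem_univ k)
      rw [hA] at h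
      have h' : a k * a k ≤ 1 := h
      nlinarith [sq_abs (a k), abs_nonneg (a k)]
    have hbi : ∀ i : Fin 3, |b i| ≤ 1 := by
      intro k
      have h := Finset.single_le_sum (f := fun i => b i * b i)
        (fun i _ => mul_self_nonneg _) (Finset.mem_univ k)
      rw [hB] at h
      have h' : b k * b k ≤ 1 := h
      nlinarith [sq_abs (b k), abs_nonneg (b k)]
    apply ciSup_le
    intro i'
    apply ciSup_le
    intro j'
    rw [abs_div]
    have h1 : |a i' * b j' + b i' * a j'| ≤ |a i'| * |b j'| + |b i'| * |a j'| := by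
      calc |a i' * b j' + b i' * a j'| ≤ |a i' * b j'| + |b i' * a j'| := abs_add_le _ _
        _ = |a i'| * |b j'| + |b i'| * |a j'| := by rw [abs_mul, abs_mul]
    have := hai i'; have := hai j'; have := hbi i'; have := hbi j'
    have h0 : (0:ℝ) ≤ |a i'| := abs_nonneg _
    have h0' : (0:ℝ) ≤ |b i'| := abs_nonneg _
    have h0'' : (0:ℝ) ≤ |a j'| := abs_nonneg _
    have h0''' : (0:ℝ) ≤ |b j'| := abs_nonneg _
    rw [abs_of_pos (by norm_num : (0:ℝ) < 2)]
    nlinarith
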